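/- Let N ≥ 1, α ≤ 0, a_0 > 0, δ > 0, and set μ = a_0 / ((2-α)^2 (2+δ)), ⟨x⟩ = √(1+|x|^2), and ψ(t,x) = μ ⟨x⟩^{2-α} / (1+t) for t ≥ 0. Then for all t ≥ 0 and x ∈ ℝ^N, -∂_t ψ(t,x) · a_0 ⟨x⟩^{-α} ≥ (2+δ) |∇_x ψ(t,x)|^2. -/

import Mathlib

theorem ity_weight_dissipativity (N : ℕ) (hN : 1 ≤ N) (α a0 δ : ℝ)
    (hα : α ≤ 0) (ha0 : 0 < a0) (hδ : 0 < δ)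
    (μ : ℝ) (hμ : μ = a0 / ((2-α)^2 * (2+δ)))
    (ψ : ℝ → EuclideanSpace ℝ (Fin N) → ℝ)
    (hψ : ∀ t x, ψ t x = μ * (1+‖x‖^2) ^ ((2-α)/2) / (1+t)) :
    ∀ t ≥ (0:ℝ), ∀ x : EuclideanSpace ℝ (Fin N),
      -(deriv (fun s => ψ s x) t) * (a0 * (1+‖x‖^2) ^ (-α/2))
        ≥ (2+δ) * ‖fderiv ℝ (ψ t) x‖^2 := by
  intro t ht x
  set C : ℝ := 1 + ‖x‖^2 with hCdef
  have hC1 : (1:ℝ) ≤ C := by nlinarith [sq_nonneg ‖x‖]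
  have hC0 : (0:ℝ) < C := by positivity
  have hCne : C ≠ 0 := ne_of_gt hC0
  set p : ℝ := (2 - α) / 2 with hpdef
  have hp1 : (1:ℝ) ≤ p := by rw [hpdef]; linarith
  have ht1 : (0:ℝ) < 1 + t := by linarith
  have hd1 : ((2:ℝ)-α)^2 ≠ 0 := by nlinarith
  have hd2 : ((2:ℝ)+δ) ≠ 0 := by linarith
  have hDpos : (0:ℝ) < (2-α)^2 * (2+δ) := by nlinarith
  have hμpos : 0 < μ := by rw [hμ]; exact div_pos ha0 hDpos
  -- time derivative
  have hderiv : deriv (fun s => ψ s x) t = -(μ * C ^ p) / (1 + t)^2 := by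
    have h1 : HasDerivAt (fun s : ℝ => 1 + s) 1 t := (hasDerivAt_id t).const_add 1
    have h2 : HasDerivAt (fun s : ℝ => μ * C ^ p / (1 + s))
        (-(μ * C ^ p) / (1 + t)^2) t := by
      have := (h1.inv (ne_of_gt ht1)).const_mul (μ * C ^ p)
      simpa [div_eq_mul_inv, neg_div, mul_div_assoc, mul_comm, mul_left_comm] using this
    have : (fun s => ψ s x) = fun s => μ * C ^ p / (1 + s) := by
      funext s; rw [hψ]
    rw [this]
    exact h2.deriv
  -- space derivative
  have hsq : HasFDerivAt (fun y : EuclideanSpace ℝ (Fin N) => ‖y‖^2)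
      ((2:ℝ) • (innerSL ℝ x)) x := by
    have h := (hasFDerivAt_id x).norm_sq
    simp only [id] at h
    convert h using 1
    all_goals (ext y; simp [two_smul])
  have hbase : HasFDerivAt (fun y : EuclideanSpace ℝ (Fin N) => 1 + ‖y‖^2)
      ((2:ℝ) • (innerSL ℝ x)) x := hsq.const_add 1
  have hpow : HasFDerivAt (fun y : EuclideanSpace ℝ (Fin N) => (1 + ‖y‖^2) ^ p)
      ((p * C ^ (p - 1)) • ((2:ℝ) • (innerSL ℝ x))) x :=
    hbase.rpow_const (Or.inl hCne)
  have hψx : HasFDerivAt (ψ t)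
      ((μ / (1 + t)) • ((p * C ^ (p - 1)) • ((2:ℝ) • (innerSL ℝ x)))) x := by
    have h3 := hpow.const_mul (μ / (1 + t))
    have heq : (ψ t) = fun y => (μ / (1 + t)) * (1 + ‖y‖^2) ^ p := by
      funext y; rw [hψ]; ring
    rw [heq]
    exact h3
  have hnorm : ‖fderiv ℝ (ψ t) x‖ = (μ / (1 + t)) * (p * C ^ (p - 1)) * (2 * ‖x‖) := by
    rw [hψx.fderiv]
    rw [norm_smul, norm_smul, norm_smul, innerSL_apply_norm]
    have hcp : 0 < p * C ^ (p - 1) := by positivity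
    rw [Real.norm_eq_abs, Real.norm_eq_abs, Real.norm_eq_abs,
      abs_of_pos (by positivity : (0:ℝ) < μ / (1+t)), abs_of_pos hcp]
    norm_num; ring
  rw [hderiv, hnorm]
  -- rpow arithmetic
  have e1 : C ^ (p - 1) * C ^ (p - 1) = C ^ (-α) := by
    rw [← Real.rpow_add hC0]
    congr 1
    rw [hpdef]; ring
  have e2 : C ^ p * C ^ (-α/2) = C * C ^ (-α) := by
    rw [← Real.rpow_add hC0]
    nth_rewrite 2 [show C = C ^ (1:ℝ) by rw [Real.rpow_one]]
    rw [← Real.rpow_add hC0]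
    congr 1
    rw [hpdef]; ring
  have hx2 : ‖x‖^2 ≤ C := by rw [hCdef]; linarith
  -- reduce
  have hrα : 0 < C ^ (-α) := Real.rpow_pos_of_pos hC0 _
  have ht2 : (0:ℝ) < (1+t)^2 := by positivity
  rw [ge_iff_le]
  have key : (2+δ) * ((μ / (1 + t)) * (p * C ^ (p - 1)) * (2 * ‖x‖))^2
      = (μ / (1+t)^2) * ((2+δ) * μ * (2*p)^2 * (C^(p-1) * C^(p-1)) * ‖x‖^2) := by
    field_simp
  have lhs : -(-(μ * C ^ p) / (1 + t) ^ 2) * (a0 * C ^ (-α/2))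
      = (μ / (1+t)^2) * (a0 * (C^p * C^(-α/2))) := by
    field_simp
  rw [key, lhs, e1, e2]
  apply mul_le_mul_of_nonneg_left _ (by positivity)
  have h2p : 2 * p = 2 - α := by rw [hpdef]; ring
  have hμa : (2+δ) * μ * (2*p)^2 = a0 := by
    rw [h2p, hμ]
    have h2a : (2:ℝ) - α ≠ 0 := by linarith
    field_simp
  rw [hμa]
  calc a0 * C ^ (-α) * ‖x‖^2 ≤ a0 * C ^ (-α) * C := by
        apply mul_le_mul_of_nonneg_left hx2 (by positivity)
    _ = a0 * (C * C ^ (-α)) := by ring
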